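/- Let X be an integrable real random variable with continuous and strictly increasing cumulative distribution function, let a > 0 and b ∈ ℝ, and let p ∈ D_X. Then p ∈ D_{aX+b} and θ_p(aX + b) = θ_p(X); that is, the θ-index is invariant under location-scale transformations. -/

import Mathlib

open MeasureTheory Set
open scoped ENNReal

/-- The cumulative distribution function of a random variable `X` under `μ`. -/
noncomputable def rvCdf {Ω : Type*} [MeasurableSpace Ω]
    (μ : Measure Ω) (X : Ω → ℝ) : ℝ → ℝ :=
  fun x => (μ {ω | X ω ≤ x}).toReal

/-- Value at Risk at level `p`: the (left) `p`-quantile of `X`; for a continuous,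
strictly increasing CDF this is the unique `x` with `F x = p`. -/
noncomputable def rvVaR {Ω : Type*} [MeasurableSpace Ω]
    (μ : Measure Ω) (X : Ω → ℝ) (p : ℝ) : ℝ :=
  sInf {x | p ≤ rvCdf μ X x}

/-- Expected Shortfall at level `p`. -/
noncomputable def rvES {Ω : Type*} [MeasurableSpace Ω]
    (μ : Measure Ω) (X : Ω → ℝ) (p : ℝ) : ℝ :=
  (1 - p)⁻¹ * ∫ u in p..1, rvVaR μ X u

/-- The θ-index `θ_p(X) = (1-p)(ES_p - VaR_p)/(VaR_p - E[X])`. -/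
noncomputable def rvThetaIndex {Ω : Type*} [MeasurableSpace Ω]
    (μ : Measure Ω) (X : Ω → ℝ) (p : ℝ) : ℝ :=
  (1 - p) * (rvES μ X p - rvVaR μ X p) / (rvVaR μ X p - ∫ ω, X ω ∂μ)

private lemma tail_lemma {Ω : Type*} [MeasurableSpace Ω] (μ : Measure Ω) [IsProbabilityMeasure μ]
    {X : Ω → ℝ} (hX : Integrable X μ) {ε : ℝ} (hε : 0 < ε) :
    ∃ M : ℝ, 0 < M ∧ (μ {ω | M ≤ |X ω|}).toReal < ε := by
  set I := ∫⁻ ω, ENNReal.ofReal |X ω| ∂μ with hIdef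
  have hIlt : I < ⊤ := by
    have h2 := hX.2
    rw [hasFiniteIntegral_iff_norm] at h2
    simpa [hIdef, Real.norm_eq_abs] using h2
  set M : ℝ := I.toReal / ε + 1 with hMdef
  have hM0 : 0 < M := by positivity
  refine ⟨M, hM0, ?_⟩
  have hmeas : AEMeasurable (fun ω => ENNReal.ofReal |X ω|) μ :=
    ENNReal.measurable_ofReal.comp_aemeasurable hX.abs.aemeasurable
  have hmark := mul_meas_ge_le_lintegral₀ hmeas (ENNReal.ofReal M)
  have hsub : {ω | M ≤ |X ω|} ⊆ {ω | ENNReal.ofReal M ≤ ENNReal.ofReal |X ω|} :=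
    fun ω h => ENNReal.ofReal_le_ofReal h
  have h1 : μ {ω | M ≤ |X ω|} ≤ I / ENNReal.ofReal M := by
    rw [ENNReal.le_div_iff_mul_le (Or.inl (ENNReal.ofReal_pos.2 hM0).ne')
      (Or.inl ENNReal.ofReal_ne_top)]
    calc μ {ω | M ≤ |X ω|} * ENNReal.ofReal M
        ≤ μ {ω | ENNReal.ofReal M ≤ ENNReal.ofReal |X ω|} * ENNReal.ofReal M := by
          gcongr
      _ = ENNReal.ofReal M * μ {ω | ENNReal.ofReal M ≤ ENNReal.ofReal |X ω|} := mul_comm _ _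
      _ ≤ I := hmark
  have h2 : (μ {ω | M ≤ |X ω|}).toReal ≤ I.toReal / M := by
    have := ENNReal.toReal_mono (ENNReal.div_lt_top hIlt.ne (ENNReal.ofReal_pos.2 hM0).ne').ne h1
    rwa [ENNReal.toReal_div, ENNReal.toReal_ofReal hM0.le] at this
  have h3 : I.toReal / M < ε := by
    rw [div_lt_iff₀ hM0]
    have : ε * M = I.toReal + ε := by
      rw [hMdef]; field_simp
    have hInn : (0:ℝ) ≤ I.toReal := ENNReal.toReal_nonneg
    nlinarith
  linarith


private lemma var_char {Ω : Type*} [MeasurableSpace Ω] (μ : Measure Ω) [IsProbabilityMeasure μ]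
    {X : Ω → ℝ} (hX : Integrable X μ)
    (hFc : Continuous (rvCdf μ X)) (hFm : StrictMono (rvCdf μ X))
    {q : ℝ} (hq : q ∈ Set.Ioo (0:ℝ) 1) :
    rvCdf μ X (rvVaR μ X q) = q ∧ ∀ y, q ≤ rvCdf μ X y ↔ rvVaR μ X q ≤ y := by
  obtain ⟨M₁, hM₁0, hM₁⟩ := tail_lemma μ hX hq.1
  obtain ⟨M₂, hM₂0, hM₂⟩ := tail_lemma μ hX (show (0:ℝ) < 1 - q by linarith [hq.2])
  have hx₀ : rvCdf μ X (-M₁) < q := by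
    have hsub : {ω | X ω ≤ -M₁} ⊆ {ω | M₁ ≤ |X ω|} := by
      intro ω h; simp only [mem_setOf_eq] at *
      have : -X ω ≥ M₁ := by linarith
      calc M₁ ≤ -X ω := this
        _ ≤ |X ω| := neg_le_abs _
    have := ENNReal.toReal_mono (measure_ne_top μ _) (measure_mono hsub)
    calc rvCdf μ X (-M₁) ≤ (μ {ω | M₁ ≤ |X ω|}).toReal := this
      _ < q := hM₁
  have hx₁ : q ≤ rvCdf μ X M₂ := by
    have hone : (1:ℝ) ≤ rvCdf μ X M₂ + (μ {ω | M₂ < X ω}).toReal := by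
      have hU : {ω | X ω ≤ M₂} ∪ {ω | M₂ < X ω} = univ := by
        ext ω; simp [le_or_gt]
      have h1 : (1:ℝ≥0∞) ≤ μ {ω | X ω ≤ M₂} + μ {ω | M₂ < X ω} := by
        calc (1:ℝ≥0∞) = μ univ := (measure_univ).symm
          _ = μ ({ω | X ω ≤ M₂} ∪ {ω | M₂ < X ω}) := by rw [hU]
          _ ≤ _ := measure_union_le _ _
      have h2 := ENNReal.toReal_mono
        (ENNReal.add_ne_top.2 ⟨measure_ne_top μ _, measure_ne_top μ _⟩) h1
      rwa [ENNReal.toReal_one, ENNReal.toReal_add (measure_ne_top μ _) (measure_ne_top μ _)] at h2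
    have hsub : {ω | M₂ < X ω} ⊆ {ω | M₂ ≤ |X ω|} := by
      intro ω h; simp only [mem_setOf_eq] at *
      calc M₂ ≤ X ω := h.le
        _ ≤ |X ω| := le_abs_self _
    have := ENNReal.toReal_mono (measure_ne_top μ _) (measure_mono hsub)
    have : (μ {ω | M₂ < X ω}).toReal < 1 - q := lt_of_le_of_lt this hM₂
    linarith
  have h01 : -M₁ < M₂ := hFm.lt_iff_lt.1 (lt_of_lt_of_le hx₀ hx₁)
  obtain ⟨x, _, hxval⟩ := intermediate_value_Icc h01.le hFc.continuousOn ⟨hx₀.le, hx₁⟩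
  have hset : ∀ y, q ≤ rvCdf μ X y ↔ x ≤ y := by
    intro y; rw [← hxval]; exact hFm.le_iff_le
  have hVaR : rvVaR μ X q = x := by
    have : {y | q ≤ rvCdf μ X y} = Ici x := by ext y; simpa using hset y
    rw [rvVaR, this, csInf_Ici]
  refine ⟨by rw [hVaR, hxval], fun y => by rw [hVaR]; exact hset y⟩

private lemma var_monoOn {Ω : Type*} [MeasurableSpace Ω] (μ : Measure Ω) [IsProbabilityMeasure μ]
    {X : Ω → ℝ} (hX : Integrable X μ)
    (hFc : Continuous (rvCdf μ X)) (hFm : StrictMono (rvCdf μ X))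
    {u w : ℝ} (hu : u ∈ Set.Ioo (0:ℝ) 1) (hw : w ∈ Set.Ioo (0:ℝ) 1) (huw : u ≤ w) :
    rvVaR μ X u ≤ rvVaR μ X w := by
  have hcw := (var_char μ hX hFc hFm hw).1
  exact ((var_char μ hX hFc hFm hu).2 (rvVaR μ X w)).1 (by rw [hcw]; exact huw)


private lemma var_integrable {Ω : Type*} [MeasurableSpace Ω] (μ : Measure Ω)
    [IsProbabilityMeasure μ]
    {X : Ω → ℝ} (hX : Integrable X μ)
    (hFc : Continuous (rvCdf μ X)) (hFm : StrictMono (rvCdf μ X))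
    {p : ℝ} (hp : p ∈ Set.Ioo (0:ℝ) 1) :
    IntervalIntegrable (rvVaR μ X) volume p 1 := by
  set v := rvVaR μ X p with hv
  set c := max v 0 with hc
  have hc0 : 0 ≤ c := le_max_right _ _
  have hvc : v ≤ c := le_max_left _ _
  have hsub01 : Ioo p 1 ⊆ Ioo (0:ℝ) 1 := fun u hu => ⟨lt_trans hp.1 hu.1, hu.2⟩
  have hmono : MonotoneOn (rvVaR μ X) (Ioo p 1) := fun u hu w hw huw =>
    var_monoOn μ hX hFc hFm (hsub01 hu) (hsub01 hw) huw
  have hVm : AEMeasurable (rvVaR μ X) (volume.restrict (Ioo p 1)) :=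
    aemeasurable_restrict_of_monotoneOn measurableSet_Ioo hmono
  set g : ℝ → ℝ := fun u => max (rvVaR μ X u - c) 0 with hg
  have hg0 : ∀ u, 0 ≤ g u := fun u => le_max_right _ _
  have hgm : AEMeasurable g (volume.restrict (Ioo p 1)) :=
    (hVm.sub aemeasurable_const).max aemeasurable_const
  -- tail bound for the measure of level sets
  have hXtail : ∀ s : ℝ, 0 < s →
      ENNReal.ofReal (1 - rvCdf μ X s) ≤ μ {ω | s ≤ |X ω|} := by
    intro s hs
    have hU : {ω | X ω ≤ s} ∪ {ω | s < X ω} = univ := by ext ω; simp [le_or_gt]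
    have h1 : (1:ℝ≥0∞) ≤ μ {ω | X ω ≤ s} + μ {ω | s < X ω} := by
      calc (1:ℝ≥0∞) = μ univ := (measure_univ).symm
        _ = μ ({ω | X ω ≤ s} ∪ {ω | s < X ω}) := by rw [hU]
        _ ≤ _ := measure_union_le _ _
    have h2 := ENNReal.toReal_mono
      (ENNReal.add_ne_top.2 ⟨measure_ne_top μ _, measure_ne_top μ _⟩) h1
    rw [ENNReal.toReal_one, ENNReal.toReal_add (measure_ne_top μ _) (measure_ne_top μ _)] at h2
    have h3 : 1 - rvCdf μ X s ≤ (μ {ω | s < X ω}).toReal := by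
      simp only [rvCdf]; linarith
    have hsub : {ω | s < X ω} ⊆ {ω | s ≤ |X ω|} := by
      intro ω h; simp only [mem_setOf_eq] at *
      calc s ≤ X ω := h.le
        _ ≤ |X ω| := le_abs_self _
    calc ENNReal.ofReal (1 - rvCdf μ X s)
        ≤ ENNReal.ofReal ((μ {ω | s < X ω}).toReal) := ENNReal.ofReal_le_ofReal h3
      _ = μ {ω | s < X ω} := ENNReal.ofReal_toReal (measure_ne_top μ _)
      _ ≤ μ {ω | s ≤ |X ω|} := measure_mono hsub
  -- layer cake bound on g
  have hkey : ∫⁻ u in Ioo p 1, ENNReal.ofReal (g u) ≤ ∫⁻ ω, ENNReal.ofReal |X ω| ∂μ := by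
    rw [lintegral_eq_lintegral_meas_le (volume.restrict (Ioo p 1))
      (Filter.Eventually.of_forall hg0) hgm]
    have hptw : ∀ t : ℝ, t ∈ Ioi (0:ℝ) →
        (volume.restrict (Ioo p 1)) {u | t ≤ g u} ≤ μ {ω | t ≤ |X ω|} := by
      intro t ht
      rw [Measure.restrict_apply' measurableSet_Ioo]
      have hss : {u | t ≤ g u} ∩ Ioo p 1 ⊆ Icc (rvCdf μ X (c + t)) 1 := by
        rintro u ⟨hu1, hu2⟩
        simp only [mem_setOf_eq, hg] at hu1
        have hVu : c + t ≤ rvVaR μ X u := by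
          rcases max_cases (rvVaR μ X u - c) 0 with ⟨h, _⟩ | ⟨h, _⟩
          · rw [h] at hu1; linarith
          · rw [h] at hu1; exact absurd hu1 (not_le.2 ht)
        have hFu := (var_char μ hX hFc hFm (hsub01 hu2)).1
        have : rvCdf μ X (c + t) ≤ rvCdf μ X (rvVaR μ X u) := hFm.monotone hVu
        rw [hFu] at this
        exact ⟨this, hu2.2.le⟩
      calc volume ({u | t ≤ g u} ∩ Ioo p 1) ≤ volume (Icc (rvCdf μ X (c + t)) 1) :=
            measure_mono hss
        _ = ENNReal.ofReal (1 - rvCdf μ X (c + t)) := by rw [Real.volume_Icc]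
        _ ≤ μ {ω | c + t ≤ |X ω|} := hXtail _ (by linarith [ht.out])
        _ ≤ μ {ω | t ≤ |X ω|} := measure_mono (fun ω h => by
            simp only [mem_setOf_eq] at *; linarith)
    calc ∫⁻ t in Ioi (0:ℝ), (volume.restrict (Ioo p 1)) {u | t ≤ g u}
        ≤ ∫⁻ t in Ioi (0:ℝ), μ {ω | t ≤ |X ω|} := by
          refine lintegral_mono_ae ?_
          rw [ae_restrict_iff' measurableSet_Ioi]
          exact Filter.Eventually.of_forall hptw
      _ = ∫⁻ ω, ENNReal.ofReal |X ω| ∂μ := by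
          refine (lintegral_eq_lintegral_meas_le μ
            (Filter.Eventually.of_forall fun ω => abs_nonneg _) hX.abs.aemeasurable).symm
  have hXfin : ∫⁻ ω, ENNReal.ofReal |X ω| ∂μ < ⊤ := by
    have h2 := hX.2
    rw [hasFiniteIntegral_iff_norm] at h2
    simpa [Real.norm_eq_abs] using h2
  have hgint : Integrable g (volume.restrict (Ioo p 1)) := by
    refine ⟨hgm.aestronglyMeasurable, ?_⟩
    rw [hasFiniteIntegral_iff_norm]
    have : ∀ u, ENNReal.ofReal ‖g u‖ = ENNReal.ofReal (g u) := fun u => by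
      rw [Real.norm_eq_abs, abs_of_nonneg (hg0 u)]
    simp only [this]
    exact lt_of_le_of_lt hkey hXfin
  have hbound : Integrable (fun u => g u + (c + |v|)) (volume.restrict (Ioo p 1)) :=
    hgint.add (integrableOn_const measure_Ioo_lt_top.ne)
  have hVint : IntegrableOn (rvVaR μ X) (Ioo p 1) volume := by
    refine Integrable.mono' hbound hVm.aestronglyMeasurable ?_
    rw [ae_restrict_iff' measurableSet_Ioo]
    refine Filter.Eventually.of_forall fun u hu => ?_
    have hvu : v ≤ rvVaR μ X u :=
      var_monoOn μ hX hFc hFm hp (hsub01 hu) hu.1.le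
    have h1 : rvVaR μ X u - c ≤ g u := le_max_left _ _
    have h2 : 0 ≤ g u := hg0 u
    have h3 : -|v| ≤ v := neg_abs_le _
    have h4 : (0:ℝ) ≤ |v| := abs_nonneg _
    rw [Real.norm_eq_abs, abs_le]
    constructor <;> linarith
  have hIoc : IntegrableOn (rvVaR μ X) (Ioc p 1) volume :=
    hVint.congr_set_ae Ioo_ae_eq_Ioc.symm
  exact (intervalIntegrable_iff_integrableOn_Ioc_of_le hp.2.le).2 hIoc


/-- For an integrable random variable `X` with continuous, strictly
increasing CDF and `p ∈ D_X = {p ∈ (0,1) : VaR_p(X) > E[X]}`, for any `a > 0`,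
`b ∈ ℝ` one has `p ∈ D_{aX+b}` and `θ_p(aX + b) = θ_p(X)` (location-scale
invariance of the θ-index). -/
theorem theta_index_location_scale_invariant
    {Ω : Type*} [MeasurableSpace Ω] (μ : Measure Ω) [IsProbabilityMeasure μ]
    (X : Ω → ℝ) (hX : Integrable X μ)
    (hFc : Continuous (rvCdf μ X)) (hFm : StrictMono (rvCdf μ X))
    (a b : ℝ) (ha : 0 < a)
    (p : ℝ) (hp : p ∈ Set.Ioo (0:ℝ) 1)
    (hD : (∫ ω, X ω ∂μ) < rvVaR μ X p) :
    (∫ ω, (a * X ω + b) ∂μ) < rvVaR μ (fun ω => a * X ω + b) p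
    ∧ rvThetaIndex μ (fun ω => a * X ω + b) p = rvThetaIndex μ X p := by
  set Y : Ω → ℝ := fun ω => a * X ω + b with hY
  have hYint : Integrable Y μ := (hX.const_mul a).add (integrable_const b)
  have hcdfY : ∀ x, rvCdf μ Y x = rvCdf μ X ((x - b) / a) := by
    intro x
    have hset : {ω | Y ω ≤ x} = {ω | X ω ≤ (x - b) / a} := by
      ext ω
      simp only [hY, mem_setOf_eq, le_div_iff₀ ha]
      constructor <;> intro h <;> nlinarith
    simp only [rvCdf, hset]
  have hGc : Continuous (rvCdf μ Y) := by
    have : rvCdf μ Y = fun x => rvCdf μ X ((x - b) / a) := funext hcdfY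
    rw [this]
    exact hFc.comp ((continuous_id.sub continuous_const).div_const a)
  have hGm : StrictMono (rvCdf μ Y) := by
    intro x y hxy
    rw [hcdfY, hcdfY]
    exact hFm ((div_lt_div_iff_of_pos_right ha).2 (by linarith))
  have hVarY : ∀ q ∈ Set.Ioo (0:ℝ) 1, rvVaR μ Y q = a * rvVaR μ X q + b := by
    intro q hq
    have hcY := var_char μ hYint hGc hGm hq
    have hcX := var_char μ hX hFc hFm hq
    have hval : rvCdf μ Y (a * rvVaR μ X q + b) = q := by
      rw [hcdfY]
      have : (a * rvVaR μ X q + b - b) / a = rvVaR μ X q := by rw [add_sub_cancel_right, mul_div_cancel_left₀ _ ha.ne']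
      rw [this, hcX.1]
    exact hGm.injective (hcY.1.trans hval.symm)
  have hEY : (∫ ω, (a * X ω + b) ∂μ) = a * (∫ ω, X ω ∂μ) + b := by
    rw [integral_add (hX.const_mul a) (integrable_const b), integral_const_mul,
      integral_const]
    simp [measure_univ]
  have hVI : IntervalIntegrable (rvVaR μ X) volume p 1 := var_integrable μ hX hFc hFm hp
  have hne1 : ∀ᵐ x : ℝ, x ≠ (1:ℝ) := by
    rw [Filter.Eventually]
    have : {x : ℝ | x ≠ 1}ᶜ = {(1:ℝ)} := by ext x; simp
    rw [mem_ae_iff, this]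
    exact measure_singleton 1
  have hIcong : (∫ u in p..1, rvVaR μ Y u) = ∫ u in p..1, (a * rvVaR μ X u + b) := by
    apply intervalIntegral.integral_congr_ae
    filter_upwards [hne1] with u hu hmem
    rw [Set.uIoc_of_le hp.2.le] at hmem
    exact hVarY u ⟨lt_trans hp.1 hmem.1, lt_of_le_of_ne hmem.2 hu⟩
  have hEq2 : (∫ u in p..1, (a * rvVaR μ X u + b)) =
      a * (∫ u in p..1, rvVaR μ X u) + (1 - p) * b := by
    rw [intervalIntegral.integral_add (hVI.const_mul a) intervalIntegrable_const,
      intervalIntegral.integral_const_mul, intervalIntegral.integral_const, smul_eq_mul]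
  have hVarYp : rvVaR μ Y p = a * rvVaR μ X p + b := hVarY p hp
  constructor
  · rw [hEY]
    show a * (∫ ω, X ω ∂μ) + b < rvVaR μ Y p
    rw [hVarYp]
    nlinarith
  · have h1p : (1:ℝ) - p ≠ 0 := by have := hp.2; intro h; linarith
    have hden : rvVaR μ X p - ∫ ω, X ω ∂μ ≠ 0 := sub_ne_zero.2 (ne_of_gt hD)
    show rvThetaIndex μ Y p = rvThetaIndex μ X p
    simp only [rvThetaIndex, rvES]
    rw [hVarYp, hIcong, hEq2]
    have hEYint : (∫ ω, Y ω ∂μ) = a * (∫ ω, X ω ∂μ) + b := hEY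
    rw [hEYint]
    have hden2 : a * rvVaR μ X p + b - (a * (∫ ω, X ω ∂μ) + b)
        = a * (rvVaR μ X p - ∫ ω, X ω ∂μ) := by ring
    rw [hden2]
    field_simp
    ring
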